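/- Let f be a C¹ real function on an open subinterval of (0, ∞) and define u : ℝ⁴ × ℝ³ → ℝ by u(x, t) = ‖t‖ − f(‖x‖). Then at every point (x, t) with r := ‖x‖ > 0 in the domain of f and ‖t‖ > 0, the squared norm of the horizontal gradient of u equals Σᵢ₌₁⁴ (ξᵢu)² = 4r² + f′(r)². -/

import Mathlib

open Set

/-- The horizontal vector fields `ξ₁, ξ₂, ξ₃, ξ₄` of the quaternionic Heisenberg
group, on `ℝ⁷ ≃ ℝ⁴ × ℝ³` with coordinates `(x₁,x₂,x₃,x₄,t₁,t₂,t₃)`. -/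
noncomputable def xiVF : Fin 4 → (Fin 7 → ℝ) → (Fin 7 → ℝ)
  | 0 => fun p => ![1, 0, 0, 0, 2 * p 1, 2 * p 2, 2 * p 3]
  | 1 => fun p => ![0, 1, 0, 0, -2 * p 0, -2 * p 3, 2 * p 2]
  | 2 => fun p => ![0, 0, 1, 0, 2 * p 3, -2 * p 0, -2 * p 1]
  | 3 => fun p => ![0, 0, 0, 1, -2 * p 2, 2 * p 1, -2 * p 0]

/-- The directional derivative `ξᵢ u` of a function `u` along `ξᵢ`. -/
noncomputable def xiD (i : Fin 4) (u : (Fin 7 → ℝ) → ℝ) (p : Fin 7 → ℝ) : ℝ :=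
  fderiv ℝ u p (xiVF i p)

/-- The norm of the horizontal gradient, `|∇₀u| = (Σᵢ (ξᵢu)²)^{1/2}`. -/
noncomputable def hGradNorm (u : (Fin 7 → ℝ) → ℝ) (p : Fin 7 → ℝ) : ℝ :=
  Real.sqrt (∑ i : Fin 4, (xiD i u p) ^ 2)

/-- The horizontal mean curvature `H⁰ = Σᵢ ξᵢ(ξᵢu / |∇₀u|)` of the level
hypersurface of `u`. -/
noncomputable def hMeanCurv (u : (Fin 7 → ℝ) → ℝ) (p : Fin 7 → ℝ) : ℝ :=
  ∑ i : Fin 4, xiD i (fun q => xiD i u q / hGradNorm u q) p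

/-- The horizontal radius `‖x‖ = (x₁²+x₂²+x₃²+x₄²)^{1/2}`. -/
noncomputable def nx (p : Fin 7 → ℝ) : ℝ :=
  Real.sqrt (p 0 ^ 2 + p 1 ^ 2 + p 2 ^ 2 + p 3 ^ 2)

/-- The vertical radius `‖t‖ = (t₁²+t₂²+t₃²)^{1/2}`. -/
noncomputable def nt (p : Fin 7 → ℝ) : ℝ :=
  Real.sqrt (p 4 ^ 2 + p 5 ^ 2 + p 6 ^ 2)

/-- For `u(x,t) = ‖t‖ − f(‖x‖)`, at points with `r = ‖x‖ > 0` in the domain of `f`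
and `‖t‖ > 0`, the squared norm of the horizontal gradient is
`Σᵢ (ξᵢu)² = 4r² + f′(r)²`. -/
theorem horizontal_gradient_sq_rotational
    (s : Set ℝ) (hs : IsOpen s) (hsord : s.OrdConnected) (hsub : s ⊆ Ioi 0)
    (f : ℝ → ℝ) (hf : ContDiffOn ℝ 1 f s)
    (p : Fin 7 → ℝ) (hr : nx p ∈ s) (htpos : 0 < nt p) :
    ∑ i : Fin 4, (xiD i (fun q => nt q - f (nx q)) p) ^ 2 =
      4 * nx p ^ 2 + (deriv f (nx p)) ^ 2 := by
  have hr0 : 0 < nx p := hsub hr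
  have hsq : ∀ i : Fin 7, HasFDerivAt (fun q : Fin 7 → ℝ => q i ^ 2)
      ((2 * p i) • (ContinuousLinearMap.proj i : (Fin 7 → ℝ) →L[ℝ] ℝ)) p := by
    intro i
    have h1 : HasFDerivAt (fun q : Fin 7 → ℝ => q i) (ContinuousLinearMap.proj i : (Fin 7 → ℝ) →L[ℝ] ℝ) p := hasFDerivAt_apply i p
    have h2 := h1.mul h1
    have h3 := h2.congr_fderiv (g' := (2 * p i) • (ContinuousLinearMap.proj i : (Fin 7 → ℝ) →L[ℝ] ℝ)) (by rw [two_mul, add_smul])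
    have e : ((fun q : Fin 7 → ℝ => q i) * fun q => q i) = fun q => q i ^ 2 := by ext q; simp [sq]
    rw [e] at h3
    exact h3
  have hxne : p 0 ^ 2 + p 1 ^ 2 + p 2 ^ 2 + p 3 ^ 2 ≠ 0 := by
    have := Real.sqrt_pos.mp hr0; linarith
  have htne : p 4 ^ 2 + p 5 ^ 2 + p 6 ^ 2 ≠ 0 := by
    have := Real.sqrt_pos.mp htpos; linarith
  have hnx : HasFDerivAt nx ((1 / (2 * nx p)) •
      (((2 * p 0) • (ContinuousLinearMap.proj 0 : (Fin 7 → ℝ) →L[ℝ] ℝ)) +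
       ((2 * p 1) • (ContinuousLinearMap.proj 1 : (Fin 7 → ℝ) →L[ℝ] ℝ)) +
       ((2 * p 2) • (ContinuousLinearMap.proj 2 : (Fin 7 → ℝ) →L[ℝ] ℝ)) +
       ((2 * p 3) • (ContinuousLinearMap.proj 3 : (Fin 7 → ℝ) →L[ℝ] ℝ)))) p :=
    ((((hsq 0).add (hsq 1)).add (hsq 2)).add (hsq 3)).sqrt hxne
  have hnt : HasFDerivAt nt ((1 / (2 * nt p)) •
      (((2 * p 4) • (ContinuousLinearMap.proj 4 : (Fin 7 → ℝ) →L[ℝ] ℝ)) +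
       ((2 * p 5) • (ContinuousLinearMap.proj 5 : (Fin 7 → ℝ) →L[ℝ] ℝ)) +
       ((2 * p 6) • (ContinuousLinearMap.proj 6 : (Fin 7 → ℝ) →L[ℝ] ℝ)))) p :=
    (((hsq 4).add (hsq 5)).add (hsq 6)).sqrt htne
  have hfd : HasDerivAt f (deriv f (nx p)) (nx p) :=
    (((hf.contDiffAt (hs.mem_nhds hr)).differentiableAt one_ne_zero)).hasDerivAt
  have hfnx : HasFDerivAt (fun q => f (nx q)) ((deriv f (nx p)) • ((1 / (2 * nx p)) •
      (((2 * p 0) • (ContinuousLinearMap.proj 0 : (Fin 7 → ℝ) →L[ℝ] ℝ)) +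
       ((2 * p 1) • (ContinuousLinearMap.proj 1 : (Fin 7 → ℝ) →L[ℝ] ℝ)) +
       ((2 * p 2) • (ContinuousLinearMap.proj 2 : (Fin 7 → ℝ) →L[ℝ] ℝ)) +
       ((2 * p 3) • (ContinuousLinearMap.proj 3 : (Fin 7 → ℝ) →L[ℝ] ℝ))))) p :=
    hfd.comp_hasFDerivAt p hnx
  have hU : HasFDerivAt (fun q => nt q - f (nx q)) _ p := hnt.sub hfnx
  have hfder := hU.fderiv
  have hxd : ∀ i : Fin 4, xiD i (fun q => nt q - f (nx q)) p =
      (1 / (2 * nt p)) * (2 * p 4 * (xiVF i p 4) + 2 * p 5 * (xiVF i p 5) + 2 * p 6 * (xiVF i p 6))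
      - deriv f (nx p) * ((1 / (2 * nx p)) *
        (2 * p 0 * (xiVF i p 0) + 2 * p 1 * (xiVF i p 1) + 2 * p 2 * (xiVF i p 2) + 2 * p 3 * (xiVF i p 3))) := by
    intro i
    unfold xiD
    rw [hfder]
    simp [ContinuousLinearMap.add_apply, ContinuousLinearMap.smul_apply,
      ContinuousLinearMap.proj_apply, mul_add]
    try ring
  have rne : nx p ≠ 0 := ne_of_gt hr0
  have tne : nt p ≠ 0 := ne_of_gt htpos
  have hr2 : nx p ^ 2 = p 0 ^ 2 + p 1 ^ 2 + p 2 ^ 2 + p 3 ^ 2 := Real.sq_sqrt (by positivity)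
  have ht2 : nt p ^ 2 = p 4 ^ 2 + p 5 ^ 2 + p 6 ^ 2 := Real.sq_sqrt (by positivity)
  rw [Fin.sum_univ_four, hxd 0, hxd 1, hxd 2, hxd 3]
  simp only [xiVF, Matrix.cons_val_zero, Matrix.cons_val_one, Matrix.head_cons,
    Matrix.cons_val_two, Matrix.tail_cons, Matrix.cons_val_three, Matrix.cons_val_four,
    Matrix.cons_val_fin_one]
  have e5 : ∀ a b c d e g h : ℝ, (![a,b,c,d,e,g,h] : Fin 7 → ℝ) 5 = g := fun _ _ _ _ _ _ _ => rfl
  have e6 : ∀ a b c d e g h : ℝ, (![a,b,c,d,e,g,h] : Fin 7 → ℝ) 6 = h := fun _ _ _ _ _ _ _ => rfl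
  simp only [e5, e6]
  have hkey : 4 * ((p 0 ^ 2 + p 1 ^ 2 + p 2 ^ 2 + p 3 ^ 2) * (p 4 ^ 2 + p 5 ^ 2 + p 6 ^ 2)) / (nt p) ^ 2
      + deriv f (nx p) ^ 2 * (p 0 ^ 2 + p 1 ^ 2 + p 2 ^ 2 + p 3 ^ 2) / (nx p) ^ 2
      = 4 * nx p ^ 2 + deriv f (nx p) ^ 2 := by
    rw [← hr2, ← ht2]
    field_simp
  rw [← hkey]
  ring
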